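/- Let Y be a real random variable, let A be an event with P(A) = δ > 0, and suppose the distribution of Y is continuous with quantile function F⁻¹. Then E[Y | A] ≥ E[Y | Y < F⁻¹(δ)] and E[Y | A] ≤ E[Y | Y > F⁻¹(1−δ)]. (Horowitz–Manski trimming bounds: the conditional mean of Y on an event of probability δ is bounded between the mean of the lower δ-tail and the mean of the upper δ-tail of Y.) -/

import Mathlib

open MeasureTheory Set

/-- Conditional mean of `Y` on the event `A`. -/
noncomputable def condMean {Ω : Type*} [MeasurableSpace Ω] (μ : Measure Ω)
    (Y : Ω → ℝ) (A : Set Ω) : ℝ :=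
  (∫ ω in A, Y ω ∂μ) / (μ A).toReal

/-- Quantile function `F⁻¹(u) = inf {y : P(Y ≤ y) ≥ u}`. -/
noncomputable def quantileFn {Ω : Type*} [MeasurableSpace Ω] (μ : Measure Ω)
    (Y : Ω → ℝ) (u : ℝ) : ℝ :=
  sInf {y : ℝ | u ≤ (μ {ω | Y ω ≤ y}).toReal}

open Filter in
/-- For an atomless real random variable, the CDF takes exactly the value `u` at the
`u`-quantile, for both the closed and open sublevel sets. -/
lemma quantile_measures {Ω : Type*} [MeasurableSpace Ω] (μ : Measure Ω) [IsProbabilityMeasure μ]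
    (Y : Ω → ℝ) (hYm : Measurable Y) (hcont : ∀ y : ℝ, μ {ω | Y ω = y} = 0)
    {u : ℝ} (hu0 : 0 < u) (hu1 : u < 1) :
    μ {ω | Y ω ≤ quantileFn μ Y u} = ENNReal.ofReal u ∧
      μ {ω | Y ω < quantileFn μ Y u} = ENNReal.ofReal u := by
  set S : Set ℝ := {y : ℝ | u ≤ (μ {ω | Y ω ≤ y}).toReal} with hS
  have hmeas : ∀ y : ℝ, MeasurableSet {ω | Y ω ≤ y} := fun y => hYm measurableSet_Iic
  have hfin : ∀ y : ℝ, μ {ω | Y ω ≤ y} ≠ ⊤ := fun y => measure_ne_top μ _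
  have hmemS : ∀ y : ℝ, y ∈ S ↔ ENNReal.ofReal u ≤ μ {ω | Y ω ≤ y} := by
    intro y
    rw [hS, mem_setOf_eq, ENNReal.ofReal_le_iff_le_toReal (hfin y)]
  have hmono : ∀ {y z : ℝ}, y ≤ z → μ {ω | Y ω ≤ y} ≤ μ {ω | Y ω ≤ z} := by
    intro y z hyz; exact measure_mono (fun ω h => le_trans h hyz)
  have hu1' : ENNReal.ofReal u < 1 := by
    rw [← ENNReal.ofReal_one]
    exact ENNReal.ofReal_lt_ofReal_iff_of_nonneg hu0.le |>.2 hu1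
  -- S is nonempty
  have hne : S.Nonempty := by
    have hmonoset : Monotone (fun n : ℕ => {ω | Y ω ≤ (n : ℝ)}) := by
      intro n m hnm ω hω
      simp only [mem_setOf_eq] at hω ⊢
      have : (n : ℝ) ≤ m := by exact_mod_cast hnm
      linarith
    have hun : (⋃ n : ℕ, {ω | Y ω ≤ (n : ℝ)}) = univ := by
      ext ω; simp only [mem_iUnion, mem_setOf_eq, mem_univ, iff_true]
      exact exists_nat_ge (Y ω)
    have := hmonoset.measure_iUnion (μ := μ)
    rw [hun, measure_univ] at this
    have : ENNReal.ofReal u < ⨆ n : ℕ, μ {ω | Y ω ≤ (n : ℝ)} := this ▸ hu1'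
    obtain ⟨n, hn⟩ := lt_iSup_iff.1 this
    exact ⟨(n : ℝ), (hmemS _).2 hn.le⟩
  -- S is bounded below
  have hbdd : BddBelow S := by
    have hantiset : Antitone (fun n : ℕ => {ω | Y ω ≤ -(n : ℝ)}) := by
      intro n m hnm ω hω
      simp only [mem_setOf_eq] at hω ⊢
      have : (n : ℝ) ≤ m := by exact_mod_cast hnm
      linarith
    have hin : (⋂ n : ℕ, {ω | Y ω ≤ -(n : ℝ)}) = ∅ := by
      ext ω; simp only [mem_iInter, mem_setOf_eq, mem_empty_iff_false, iff_false, not_forall]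
      obtain ⟨n, hn⟩ := exists_nat_ge (-(Y ω) + 1)
      exact ⟨n, by push_neg; linarith⟩
    have := hantiset.measure_iInter (fun n => (hmeas _).nullMeasurableSet) ⟨0, hfin _⟩
    rw [hin, measure_empty] at this
    have h0 : (⨅ n : ℕ, μ {ω | Y ω ≤ -(n : ℝ)}) < ENNReal.ofReal u := by
      rw [← this]; exact ENNReal.ofReal_pos.2 hu0
    obtain ⟨n, hn⟩ := iInf_lt_iff.1 h0
    refine ⟨-(n : ℝ), fun y hy => ?_⟩
    by_contra hlt
    push_neg at hlt
    exact absurd (lt_of_le_of_lt (le_trans ((hmemS y).1 hy) (hmono hlt.le)) hn) (lt_irrefl _)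
  set q : ℝ := quantileFn μ Y u with hq
  have hqinf : q = sInf S := rfl
  -- everything above q is in S
  have hupper : ∀ y : ℝ, q < y → y ∈ S := by
    intro y hy
    obtain ⟨s, hsS, hsy⟩ := exists_lt_of_csInf_lt hne (hqinf ▸ hy)
    exact (hmemS y).2 (le_trans ((hmemS s).1 hsS) (hmono hsy.le))
  -- ofReal u ≤ μ {Y ≤ q}
  have hge : ENNReal.ofReal u ≤ μ {ω | Y ω ≤ q} := by
    have hanti : Antitone (fun n : ℕ => {ω | Y ω ≤ q + 1 / ((n : ℝ) + 1)}) := by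
      intro n m hnm ω hω
      simp only [mem_setOf_eq] at hω ⊢
      have h1 : 1 / ((m : ℝ) + 1) ≤ 1 / ((n : ℝ) + 1) := by
        have h2 : (n : ℝ) ≤ m := by exact_mod_cast hnm
        gcongr
      linarith
    have hinter : (⋂ n : ℕ, {ω | Y ω ≤ q + 1 / ((n : ℝ) + 1)}) = {ω | Y ω ≤ q} := by
      ext ω
      simp only [mem_iInter, mem_setOf_eq]
      constructor
      · intro h
        by_contra hlt
        push_neg at hlt
        obtain ⟨n, hn⟩ := exists_nat_one_div_lt (sub_pos.2 hlt)
        exact absurd (h n) (by push_neg; linarith)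
      · intro h n
        have : (0:ℝ) < 1 / ((n : ℝ) + 1) := by positivity
        linarith
    have := hanti.measure_iInter (fun n => (hmeas _).nullMeasurableSet) ⟨0, hfin _⟩
    rw [hinter] at this
    rw [this]
    refine le_iInf fun n => ?_
    have hlt : q < q + 1 / ((n : ℝ) + 1) := by
      have : (0:ℝ) < 1 / ((n : ℝ) + 1) := by positivity
      linarith
    exact (hmemS _).1 (hupper _ hlt)
  -- μ {Y < q} ≤ ofReal u
  have hle : μ {ω | Y ω < q} ≤ ENNReal.ofReal u := by
    have hmonos : Monotone (fun n : ℕ => {ω | Y ω ≤ q - 1 / ((n : ℝ) + 1)}) := by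
      intro n m hnm ω hω
      simp only [mem_setOf_eq] at hω ⊢
      have h1 : 1 / ((m : ℝ) + 1) ≤ 1 / ((n : ℝ) + 1) := by
        have h2 : (n : ℝ) ≤ m := by exact_mod_cast hnm
        gcongr
      linarith
    have hunion : (⋃ n : ℕ, {ω | Y ω ≤ q - 1 / ((n : ℝ) + 1)}) = {ω | Y ω < q} := by
      ext ω
      simp only [mem_iUnion, mem_setOf_eq]
      constructor
      · rintro ⟨n, hn⟩
        have : (0:ℝ) < 1 / ((n : ℝ) + 1) := by positivity
        linarith
      · intro h
        obtain ⟨n, hn⟩ := exists_nat_one_div_lt (sub_pos.2 h)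
        exact ⟨n, by linarith⟩
    rw [← hunion, hmonos.measure_iUnion]
    refine iSup_le fun n => ?_
    have hnot : q - 1 / ((n : ℝ) + 1) ∉ S := by
      intro hmem
      have := csInf_le hbdd hmem
      rw [← hqinf] at this
      have hpos : (0:ℝ) < 1 / ((n : ℝ) + 1) := by positivity
      linarith
    rw [hS, mem_setOf_eq, not_le] at hnot
    exact (ENNReal.le_ofReal_iff_toReal_le (hfin _) hu0.le).2 hnot.le
  -- combine using atomlessness at q
  have hsplit : μ {ω | Y ω ≤ q} = μ {ω | Y ω < q} := by
    have hdecomp : {ω | Y ω ≤ q} = {ω | Y ω < q} ∪ {ω | Y ω = q} := by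
      ext ω; simp only [mem_setOf_eq, mem_union]
      exact le_iff_lt_or_eq
    rw [hdecomp]
    refine le_antisymm ?_ (measure_mono subset_union_left)
    calc μ ({ω | Y ω < q} ∪ {ω | Y ω = q}) ≤ μ {ω | Y ω < q} + μ {ω | Y ω = q} :=
          measure_union_le _ _
      _ = μ {ω | Y ω < q} := by rw [hcont q, add_zero]
  constructor
  · exact le_antisymm (hsplit ▸ hle) hge
  · exact le_antisymm hle (hsplit ▸ hge)

/-- If `μ A = μ B`, `Y ≤ q` on `B` and `Y ≥ q` off `B`, then `∫_B Y ≤ ∫_A Y`. -/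
lemma setIntegral_tail_le {Ω : Type*} [MeasurableSpace Ω] (μ : Measure Ω) [IsFiniteMeasure μ]
    (Y : Ω → ℝ) (hYi : Integrable Y μ)
    (A B : Set Ω) (hA : MeasurableSet A) (hB : MeasurableSet B)
    (hAB : μ A = μ B) (q : ℝ)
    (hBq : ∀ ω ∈ B, Y ω ≤ q) (hBq' : ∀ ω ∉ B, q ≤ Y ω) :
    ∫ ω in B, Y ω ∂μ ≤ ∫ ω in A, Y ω ∂μ := by
  have hiA : IntegrableOn Y A μ := hYi.integrableOn
  have hiB : IntegrableOn Y B μ := hYi.integrableOn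
  have hsplitA : (∫ ω in A ∩ B, Y ω ∂μ) + ∫ ω in A \ B, Y ω ∂μ = ∫ ω in A, Y ω ∂μ :=
    integral_inter_add_diff hB hiA
  have hsplitB : (∫ ω in A ∩ B, Y ω ∂μ) + ∫ ω in B \ A, Y ω ∂μ = ∫ ω in B, Y ω ∂μ := by
    rw [inter_comm]
    exact integral_inter_add_diff hA hiB
  -- measures of the symmetric-difference pieces agree
  have hmeq : μ (A \ B) = μ (B \ A) := by
    have h1 : μ (A ∩ B) + μ (A \ B) = μ A := measure_inter_add_diff A hB
    have h2 : μ (A ∩ B) + μ (B \ A) = μ B := by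
      rw [inter_comm]; exact measure_inter_add_diff B hA
    have h3 : μ (A ∩ B) + μ (A \ B) = μ (A ∩ B) + μ (B \ A) := by
      rw [h1, h2, hAB]
    exact (ENNReal.add_right_inj (measure_ne_top μ _)).1 h3
  have hmeqr : (μ (A \ B)).toReal = (μ (B \ A)).toReal := by rw [hmeq]
  have e1 : ∫ ω in B \ A, Y ω ∂μ ≤ (μ (B \ A)).toReal * q := by
    calc ∫ ω in B \ A, Y ω ∂μ ≤ ∫ _ in B \ A, q ∂μ :=
          setIntegral_mono_on hYi.integrableOn (integrableOn_const (measure_ne_top μ _))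
            (hB.diff hA) (fun ω hω => hBq ω hω.1)
      _ = (μ (B \ A)).toReal * q := by rw [setIntegral_const, smul_eq_mul, measureReal_def]
  have e2 : (μ (A \ B)).toReal * q ≤ ∫ ω in A \ B, Y ω ∂μ := by
    calc (μ (A \ B)).toReal * q = ∫ _ in A \ B, q ∂μ := by rw [setIntegral_const, smul_eq_mul, measureReal_def]
      _ ≤ ∫ ω in A \ B, Y ω ∂μ :=
          setIntegral_mono_on (integrableOn_const (measure_ne_top μ _))
            hYi.integrableOn (hA.diff hB) (fun ω hω => hBq' ω hω.2)
  linarith [hsplitA, hsplitB, e1, e2, hmeqr ▸ e1]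

/-- Horowitz–Manski trimming bounds: for a continuously distributed integrable `Y`
and an event `A` of probability `δ ∈ (0,1)`, the conditional mean of `Y` on `A` lies
between the mean of the lower `δ`-tail and the mean of the upper `δ`-tail of `Y`. -/
theorem horowitz_manski_trimming_bounds
    {Ω : Type*} [MeasurableSpace Ω] (μ : Measure Ω) [IsProbabilityMeasure μ]
    (Y : Ω → ℝ) (hYm : Measurable Y) (hYi : Integrable Y μ)
    (hcont : ∀ y : ℝ, μ {ω | Y ω = y} = 0)
    (A : Set Ω) (hA : MeasurableSet A)
    (δ : ℝ) (hδ0 : 0 < δ) (hδ1 : δ < 1)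
    (hPA : μ A = ENNReal.ofReal δ) :
    condMean μ Y {ω | Y ω < quantileFn μ Y δ} ≤ condMean μ Y A ∧
      condMean μ Y A ≤ condMean μ Y {ω | quantileFn μ Y (1 - δ) < Y ω} := by
  obtain ⟨hq_le, hq_lt⟩ := quantile_measures μ Y hYm hcont hδ0 hδ1
  obtain ⟨hq'_le, _⟩ := quantile_measures μ Y hYm hcont (u := 1 - δ)
    (by linarith) (by linarith)
  set q := quantileFn μ Y δ with hqdef
  set q' := quantileFn μ Y (1 - δ) with hq'def
  set B : Set Ω := {ω | Y ω < q} with hBdef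
  set C : Set Ω := {ω | q' < Y ω} with hCdef
  have hBmeas : MeasurableSet B := hYm measurableSet_Iio
  have hCmeas : MeasurableSet C := hYm measurableSet_Ioi
  have hμB : μ B = ENNReal.ofReal δ := hq_lt
  have hμC : μ C = ENNReal.ofReal δ := by
    have hCcompl : C = {ω | Y ω ≤ q'}ᶜ := by
      ext ω; simp [hCdef, not_le]
    have hm' : MeasurableSet {ω | Y ω ≤ q'} := hYm measurableSet_Iic
    have key : (1 : ENNReal) - ENNReal.ofReal (1 - δ) = ENNReal.ofReal δ := by
      rw [← ENNReal.ofReal_one, ← ENNReal.ofReal_sub _ (show (0:ℝ) ≤ 1 - δ by linarith)]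
      congr 1
      ring
    rw [hCcompl, measure_compl hm' (measure_ne_top μ _), measure_univ, hq'_le, key]
  have htoA : (μ A).toReal = δ := by rw [hPA, ENNReal.toReal_ofReal hδ0.le]
  have htoB : (μ B).toReal = δ := by rw [hμB, ENNReal.toReal_ofReal hδ0.le]
  have htoC : (μ C).toReal = δ := by rw [hμC, ENNReal.toReal_ofReal hδ0.le]
  have hlow : ∫ ω in B, Y ω ∂μ ≤ ∫ ω in A, Y ω ∂μ := by
    refine setIntegral_tail_le μ Y hYi A B hA hBmeas (by rw [hPA, hμB]) q ?_ ?_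
    · exact fun ω hω => le_of_lt hω
    · exact fun ω hω => not_lt.1 hω
  have hhigh : ∫ ω in A, Y ω ∂μ ≤ ∫ ω in C, Y ω ∂μ := by
    have hneg : ∫ ω in C, -Y ω ∂μ ≤ ∫ ω in A, -Y ω ∂μ := by
      refine setIntegral_tail_le μ (fun ω => -Y ω) hYi.neg A C hA hCmeas
        (by rw [hPA, hμC]) (-q') ?_ ?_
      · intro ω hω
        show -Y ω ≤ -q'
        have : q' < Y ω := hω
        linarith
      · intro ω hω
        show -q' ≤ -Y ω
        have : Y ω ≤ q' := not_lt.1 hω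
        linarith
    have h1 : ∫ ω in C, -Y ω ∂μ = -∫ ω in C, Y ω ∂μ := integral_neg _
    have h2 : ∫ ω in A, -Y ω ∂μ = -∫ ω in A, Y ω ∂μ := integral_neg _
    rw [h1, h2] at hneg
    linarith
  constructor
  · unfold condMean
    rw [htoA, htoB]
    gcongr
  · unfold condMean
    rw [htoA, htoC]
    gcongr
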